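/- For every formula α in negation normal form, there exists a derivation from ⊤ to α ∨ ᾱ using only atomic interaction (⊤ → a ∨ ¬a), switch, and equality steps, whose length is O(|α|) and whose total size is O(|α|²), where ᾱ is the De Morgan dual of α. -/
import Mathlib


/-- Formulae of the calculus of structures in negation normal form. -/
inductive Formula : Type
  | top : Formula
  | bot : Formula
  | atom : ℕ → Formula
  | natom : ℕ → Formula
  | or : Formula → Formula → Formula
  | and : Formula → Formula → Formula
deriving DecidableEq

/-- Boolean evaluation of a formula under an assignment. -/
def Formula.eval (v : ℕ → Bool) : Formula → Bool
  | .top => true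
  | .bot => false
  | .atom n => v n
  | .natom n => !(v n)
  | .or a b => a.eval v || b.eval v
  | .and a b => a.eval v && b.eval v

/-- Size of a formula: number of unit and atom occurrences. -/
def Formula.size : Formula → ℕ
  | .top => 1
  | .bot => 1
  | .atom _ => 1
  | .natom _ => 1
  | .or a b => a.size + b.size
  | .and a b => a.size + b.size

/-- De Morgan dual (negation in negation normal form). -/
def Formula.dual : Formula → Formula
  | .top => .bot
  | .bot => .top
  | .atom n => .natom n
  | .natom n => .atom n
  | .or a b => .and a.dual b.dual
  | .and a b => .or a.dual b.dual

/-- The equality relation `=` on formulae: commutativity, associativity, unit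
laws, closed under reflexivity, symmetry, transitivity and context closure. -/
inductive FEq : Formula → Formula → Prop
  | orComm (a b) : FEq (.or a b) (.or b a)
  | andComm (a b) : FEq (.and a b) (.and b a)
  | orAssoc (a b c) : FEq (.or (.or a b) c) (.or a (.or b c))
  | andAssoc (a b c) : FEq (.and (.and a b) c) (.and a (.and b c))
  | orBot (a) : FEq (.or a .bot) a
  | andTop (a) : FEq (.and a .top) a
  | topTop : FEq (.or .top .top) .top
  | botBot : FEq (.and .bot .bot) .bot
  | refl (a) : FEq a a
  | symm {a b} : FEq a b → FEq b a
  | trans {a b c} : FEq a b → FEq b c → FEq a c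
  | orCongL {a b} (c) : FEq a b → FEq (.or a c) (.or b c)
  | orCongR {a b} (c) : FEq a b → FEq (.or c a) (.or c b)
  | andCongL {a b} (c) : FEq a b → FEq (.and a c) (.and b c)
  | andCongR {a b} (c) : FEq a b → FEq (.and c a) (.and c b)

/-- Closure of a rule relation under arbitrary formula contexts. -/
inductive CtxStep (R : Formula → Formula → Prop) : Formula → Formula → Prop
  | base {a b} : R a b → CtxStep R a b
  | orL {a b} (c) : CtxStep R a b → CtxStep R (.or a c) (.or b c)
  | orR {a b} (c) : CtxStep R a b → CtxStep R (.or c a) (.or c b)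
  | andL {a b} (c) : CtxStep R a b → CtxStep R (.and a c) (.and b c)
  | andR {a b} (c) : CtxStep R a b → CtxStep R (.and c a) (.and c b)

/-- `Deriv R α β l s`: there is a derivation from premiss `α` to conclusion `β`
using rules from `R` (applied inside contexts), of length `l` and total size `s`
(the sum of the sizes of all formulae appearing in the derivation). -/
inductive Deriv (R : Formula → Formula → Prop) : Formula → Formula → ℕ → ℕ → Prop
  | refl (a) : Deriv R a a 0 a.size
  | step {a b c l s} : CtxStep R a b → Deriv R b c l s → Deriv R a c (l + 1) (s + a.size)

/-- Rules allowed in Lemma LemGInt: atomic interaction, switch and equality. -/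
inductive AiSwEq : Formula → Formula → Prop
  | ai (a : ℕ) : AiSwEq .top (.or (.atom a) (.natom a))
  | ai' (a : ℕ) : AiSwEq .top (.or (.natom a) (.atom a))
  | sw (A B C : Formula) : AiSwEq (.and A (.or B C)) (.or (.and A B) C)
  | eqv {a b : Formula} : FEq a b → AiSwEq a b

section Helpers

lemma Formula.size_pos : ∀ α : Formula, 1 ≤ α.size
  | .top => le_refl _
  | .bot => le_refl _
  | .atom _ => le_refl _
  | .natom _ => le_refl _
  | .or a b => le_trans a.size_pos (Nat.le_add_right _ _)
  | .and a b => le_trans a.size_pos (Nat.le_add_right _ _)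

lemma Formula.dual_size : ∀ α : Formula, α.dual.size = α.size
  | .top => rfl
  | .bot => rfl
  | .atom _ => rfl
  | .natom _ => rfl
  | .or a b => by simp [Formula.dual, Formula.size, a.dual_size, b.dual_size]
  | .and a b => by simp [Formula.dual, Formula.size, a.dual_size, b.dual_size]

lemma Deriv.snoc {R : Formula → Formula → Prop} {a b c : Formula} {l s : ℕ}
    (d : Deriv R a b l s) (h : CtxStep R b c) :
    Deriv R a c (l + 1) (s + c.size) := by
  induction d with
  | refl x =>
      have := Deriv.step h (Deriv.refl c)
      rwa [Nat.add_comm c.size x.size] at this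
  | step h' d ih =>
      have := Deriv.step h' (ih h)
      convert this using 1
      omega

lemma Deriv.comp {R : Formula → Formula → Prop} {a b c : Formula} {l1 s1 l2 s2 : ℕ}
    (d1 : Deriv R a b l1 s1) (d2 : Deriv R b c l2 s2) :
    ∃ s ≤ s1 + s2, Deriv R a c (l1 + l2) s := by
  induction d1 with
  | refl x => exact ⟨s2, by omega, by simpa using d2⟩
  | step h d ih =>
      rename_i aa bb cc lt st
      obtain ⟨s', hs, d'⟩ := ih d2
      have h2 := Deriv.step h d'
      refine ⟨s' + aa.size, by omega, ?_⟩
      convert h2 using 1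
      omega

lemma Deriv.liftOrR {R : Formula → Formula → Prop} {a b : Formula} {l s : ℕ} (c : Formula)
    (d : Deriv R a b l s) :
    Deriv R (.or c a) (.or c b) l (s + (l + 1) * c.size) := by
  induction d with
  | refl x =>
      have := Deriv.refl (R := R) (Formula.or c x)
      convert this using 1
      simp [Formula.size]; try ring
  | step h d ih =>
      have := Deriv.step (CtxStep.orR c h) ih
      convert this using 1
      simp [Formula.size]; try ring

lemma Deriv.liftOrL {R : Formula → Formula → Prop} {a b : Formula} {l s : ℕ} (c : Formula)
    (d : Deriv R a b l s) :
    Deriv R (.or a c) (.or b c) l (s + (l + 1) * c.size) := by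
  induction d with
  | refl x =>
      have := Deriv.refl (R := R) (Formula.or x c)
      convert this using 1
      simp [Formula.size]; try ring
  | step h d ih =>
      have := Deriv.step (CtxStep.orL c h) ih
      convert this using 1
      simp [Formula.size]; try ring

lemma Deriv.liftAndR {R : Formula → Formula → Prop} {a b : Formula} {l s : ℕ} (c : Formula)
    (d : Deriv R a b l s) :
    Deriv R (.and c a) (.and c b) l (s + (l + 1) * c.size) := by
  induction d with
  | refl x =>
      have := Deriv.refl (R := R) (Formula.and c x)
      convert this using 1
      simp [Formula.size]; try ring
  | step h d ih =>
      have := Deriv.step (CtxStep.andR c h) ih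
      convert this using 1
      simp [Formula.size]; try ring

lemma Deriv.one {R : Formula → Formula → Prop} {a b : Formula} (h : CtxStep R a b) :
    Deriv R a b 1 (b.size + a.size) :=
  Deriv.step h (Deriv.refl b)

end Helpers

lemma key_deriv : ∀ α : Formula, ∃ l s : ℕ,
    Deriv AiSwEq .top (.or α α.dual) l s ∧
    l ≤ 5 * α.size - 4 ∧ s ≤ 16 * α.size ^ 2 := by
  intro α
  induction α with
  | top =>
      refine ⟨_, _, Deriv.one (CtxStep.base (AiSwEq.eqv (FEq.symm (FEq.orBot .top)))),
        ?_, ?_⟩ <;> decide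
  | bot =>
      refine ⟨_, _, Deriv.one (CtxStep.base (AiSwEq.eqv (FEq.symm
        (FEq.trans (FEq.orComm .bot .top) (FEq.orBot .top))))), ?_, ?_⟩ <;> decide
  | atom n =>
      refine ⟨_, _, Deriv.one (CtxStep.base (AiSwEq.ai n)), ?_, ?_⟩ <;> norm_num [Formula.size, Formula.dual]
  | natom n =>
      refine ⟨_, _, Deriv.one (CtxStep.base (AiSwEq.ai' n)), ?_, ?_⟩ <;> norm_num [Formula.size, Formula.dual]
  | or a b iha ihb =>
      obtain ⟨l1, s1, D1, hl1, hs1⟩ := iha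
      obtain ⟨l2, s2, D2, hl2, hs2⟩ := ihb
      have ha := a.size_pos
      have hb := b.size_pos
      -- ⊤ →* a ∨ ā → a ∨ (ā ∧ ⊤)
      have A := D1.snoc (CtxStep.base (AiSwEq.eqv
        (FEq.orCongR a (FEq.symm (FEq.andTop a.dual)))))
      -- ⊤ →* b ∨ b̄ → b̄ ∨ b
      have D2' := D2.snoc (CtxStep.base (AiSwEq.eqv (FEq.orComm b b.dual)))
      -- lift into context a ∨ (ā ∧ ·)
      have L := Deriv.liftOrR a (Deriv.liftAndR a.dual D2')
      obtain ⟨s3, hs3, D3⟩ := A.comp L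
      -- switch: a ∨ (ā ∧ (b̄ ∨ b)) → a ∨ ((ā ∧ b̄) ∨ b)
      have C1 := D3.snoc (CtxStep.orR a (CtxStep.base (AiSwEq.sw a.dual b.dual b)))
      -- eq: a ∨ ((ā ∧ b̄) ∨ b) = (a ∨ b) ∨ (ā ∧ b̄)
      have C2 := C1.snoc (CtxStep.base (AiSwEq.eqv
        (FEq.trans (FEq.orCongR a (FEq.orComm (.and a.dual b.dual) b))
          (FEq.symm (FEq.orAssoc a b (.and a.dual b.dual))))))
      refine ⟨_, _, C2, ?_, ?_⟩
      · simp only [Formula.size]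
        omega
      · simp only [Formula.size, Formula.dual_size] at hs3 ⊢
        have hmul : (l2 + 1 + 1) * a.size ≤ 5 * b.size * a.size :=
          Nat.mul_le_mul_right a.size (by omega)
        nlinarith [hs1, hs2, hs3, hmul, ha, hb,
          Nat.mul_le_mul ha hb,
          Nat.le_mul_of_pos_right a.size (show 0 < b.size from hb),
          Nat.le_mul_of_pos_left b.size (show 0 < a.size from ha)]
  | and a b iha ihb =>
      obtain ⟨l1, s1, D1, hl1, hs1⟩ := iha
      obtain ⟨l2, s2, D2, hl2, hs2⟩ := ihb
      have ha := a.size_pos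
      have hb := b.size_pos
      -- ⊤ →* a ∨ ā → (a ∧ ⊤) ∨ ā
      have A := D1.snoc (CtxStep.base (AiSwEq.eqv
        (FEq.orCongL a.dual (FEq.symm (FEq.andTop a)))))
      -- lift ⊤ →* b ∨ b̄ into context (a ∧ ·) ∨ ā
      have L := Deriv.liftOrL a.dual (Deriv.liftAndR a D2)
      obtain ⟨s3, hs3, D3⟩ := A.comp L
      -- switch: (a ∧ (b ∨ b̄)) ∨ ā → ((a ∧ b) ∨ b̄) ∨ ā
      have C1 := D3.snoc (CtxStep.orL a.dual (CtxStep.base (AiSwEq.sw a b b.dual)))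
      -- eq: ((a ∧ b) ∨ b̄) ∨ ā = (a ∧ b) ∨ (ā ∨ b̄)
      have C2 := C1.snoc (CtxStep.base (AiSwEq.eqv
        (FEq.trans (FEq.orAssoc (.and a b) b.dual a.dual)
          (FEq.orCongR (.and a b) (FEq.orComm b.dual a.dual)))))
      refine ⟨_, _, C2, ?_, ?_⟩
      · simp only [Formula.size]
        omega
      · simp only [Formula.size, Formula.dual_size] at hs3 ⊢
        have hmul : (l2 + 1) * a.size ≤ 5 * b.size * a.size :=
          Nat.mul_le_mul_right a.size (by omega)
        nlinarith [hs1, hs2, hs3, hmul, ha, hb,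
          Nat.mul_le_mul ha hb,
          Nat.le_mul_of_pos_right a.size (show 0 < b.size from hb),
          Nat.le_mul_of_pos_left b.size (show 0 < a.size from ha)]

/-- Lemma LemGInt: for every formula `α` there is a derivation from
`⊤` to `α ∨ ᾱ` using only atomic interaction, switch and equality, of length
`O(|α|)` and size `O(|α|²)`. -/
theorem atomic_interaction_derivable :
    ∃ C : ℕ, ∀ α : Formula, ∃ l s : ℕ,
      Deriv AiSwEq .top (.or α α.dual) l s ∧
      l ≤ C * α.size ∧ s ≤ C * α.size ^ 2 := by
  refine ⟨16, fun α => ?_⟩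
  obtain ⟨l, s, D, hl, hs⟩ := key_deriv α
  exact ⟨l, s, D, le_trans hl (by have := α.size_pos; omega), hs⟩
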